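/- Assume ℓ is convex and twice differentiable in its first argument, and let D be partitioned into a nonempty forget set D_f and a nonempty retain set D_r. Then the upweighted dual Hessian at Δα = 0 satisfies H_{Δα*} := ∇²_{Δα} L̃_D(0) − (|D_f|/|D|) ∇²_{Δα} L̃_{D_f}(0) = (|D_r|/|D|) ( K_rᵀ · ∇²_{f^lin(X_r, θ̂*)} L̂_{D_r} · K_r + λ K ), where K_r := K(X_r, X), K := K(X, X), and ∇²_{f^lin(X_r, θ̂*)} L̂_{D_r} is the block-diagonal matrix with blocks (1/|D_r|)·∇²_u ℓ(u, y) at u = f^lin(x, θ̂*) for (x,y) ∈ D_r. -/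

import Mathlib

open Finset Matrix

noncomputable section

/-- Squared ℓ₂ norm of a finitely-indexed real vector. -/
def sqnorm {ι : Type*} [Fintype ι] (v : ι → ℝ) : ℝ := ∑ i, v i ^ 2

/-- The linearized model `f^lin(x, θ) = f(x, θ') + J(x)(θ - θ')`, where `f0 x = f(x, θ')`
and `J x` is the Jacobian of `f(x, ·)` at `θ'`. -/
def flin {din dout dθ : ℕ}
    (f0 : (Fin din → ℝ) → Fin dout → ℝ)
    (J : (Fin din → ℝ) → Matrix (Fin dout) (Fin dθ) ℝ)
    (θ' : Fin dθ → ℝ) (xt : Fin din → ℝ) (θ : Fin dθ → ℝ) : Fin dout → ℝ :=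
  f0 xt + J xt *ᵥ (θ - θ')

/-- Regularized empirical risk `L̂_S(θ)` of the linearized model over the subset of the
dataset indexed by `S`. -/
def empRisk {din dout dθ n : ℕ}
    (f0 : (Fin din → ℝ) → Fin dout → ℝ)
    (J : (Fin din → ℝ) → Matrix (Fin dout) (Fin dθ) ℝ)
    (θ' : Fin dθ → ℝ) (X : Fin n → Fin din → ℝ) (Y : Fin n → Fin dout → ℝ)
    (ℓ : (Fin dout → ℝ) → (Fin dout → ℝ) → ℝ) (lam : ℝ)
    (S : Finset (Fin n)) (θ : Fin dθ → ℝ) : ℝ :=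
  (S.card : ℝ)⁻¹ * ∑ i ∈ S, (ℓ (flin f0 J θ' (X i) θ) (Y i) + lam / 2 * sqnorm (θ - θ'))

/-- Gradient of the loss `ℓ(·, y)` in its first argument, as a vector. -/
def gradloss {dout : ℕ} (ℓ : (Fin dout → ℝ) → (Fin dout → ℝ) → ℝ)
    (ytgt u : Fin dout → ℝ) : Fin dout → ℝ :=
  fun a => fderiv ℝ (fun v => ℓ v ytgt) u (Pi.single a 1)

/-- Hessian of the loss `ℓ(·, y)` in its first argument, as a matrix. -/
def hessloss {dout : ℕ} (ℓ : (Fin dout → ℝ) → (Fin dout → ℝ) → ℝ)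
    (ytgt u : Fin dout → ℝ) : Fin dout → Fin dout → ℝ :=
  fun a b => fderiv ℝ (fun v => fderiv ℝ (fun w => ℓ w ytgt) v (Pi.single b 1)) u (Pi.single a 1)

/-- Stacked Jacobian `J(X) ∈ ℝ^{d_out·n × d_θ}`, whose `i`-th row block is `J(x_i)`. -/
def JX {din dout dθ n : ℕ}
    (J : (Fin din → ℝ) → Matrix (Fin dout) (Fin dθ) ℝ)
    (X : Fin n → Fin din → ℝ) : Matrix (Fin n × Fin dout) (Fin dθ) ℝ :=
  fun q p => J (X q.1) q.2 p

/-- Empirical NTK Gram matrix `K = K(X, X) = J(X) J(X)ᵀ`. -/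
def Kmat {din dout dθ n : ℕ}
    (J : (Fin din → ℝ) → Matrix (Fin dout) (Fin dθ) ℝ)
    (X : Fin n → Fin din → ℝ) : Matrix (Fin n × Fin dout) (Fin n × Fin dout) ℝ :=
  JX J X * (JX J X)ᵀ

/-- NTK row block `K(x, X) = J(x) J(X)ᵀ ∈ ℝ^{d_out × d_out·n}`. -/
def KxX {din dout dθ n : ℕ}
    (J : (Fin din → ℝ) → Matrix (Fin dout) (Fin dθ) ℝ)
    (X : Fin n → Fin din → ℝ) (xt : Fin din → ℝ) : Matrix (Fin dout) (Fin n × Fin dout) ℝ :=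
  J xt * (JX J X)ᵀ

/-- Reparameterization `φ(Δα) = θ̂* + J(X)ᵀ Δα`. -/
def phi {din dout dθ n : ℕ}
    (J : (Fin din → ℝ) → Matrix (Fin dout) (Fin dθ) ℝ)
    (X : Fin n → Fin din → ℝ) (θstar : Fin dθ → ℝ)
    (Δα : Fin n × Fin dout → ℝ) : Fin dθ → ℝ :=
  θstar + (JX J X)ᵀ *ᵥ Δα

/-- Reparameterized model `g^lin(x, Δα) = f^lin(x, θ̂*) + K(x, X) Δα`. -/
def glin {din dout dθ n : ℕ}
    (f0 : (Fin din → ℝ) → Fin dout → ℝ)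
    (J : (Fin din → ℝ) → Matrix (Fin dout) (Fin dθ) ℝ)
    (θ' : Fin dθ → ℝ) (X : Fin n → Fin din → ℝ) (θstar : Fin dθ → ℝ)
    (xt : Fin din → ℝ) (Δα : Fin n × Fin dout → ℝ) : Fin dout → ℝ :=
  flin f0 J θ' xt θstar + KxX J X xt *ᵥ Δα

/-- Dual risk `L̃_S(Δα) = (1/|S|) Σ_{(x,y)∈S} ( ℓ(g^lin(x, Δα), y) + (λ/2)‖φ(Δα) − θ'‖₂² )`. -/
def dualRisk {din dout dθ n : ℕ}
    (f0 : (Fin din → ℝ) → Fin dout → ℝ)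
    (J : (Fin din → ℝ) → Matrix (Fin dout) (Fin dθ) ℝ)
    (θ' : Fin dθ → ℝ) (X : Fin n → Fin din → ℝ) (Y : Fin n → Fin dout → ℝ)
    (ℓ : (Fin dout → ℝ) → (Fin dout → ℝ) → ℝ) (lam : ℝ) (θstar : Fin dθ → ℝ)
    (S : Finset (Fin n)) (Δα : Fin n × Fin dout → ℝ) : ℝ :=
  (S.card : ℝ)⁻¹ *
    ∑ i ∈ S, (ℓ (glin f0 J θ' X θstar (X i) Δα) (Y i) +
      lam / 2 * sqnorm (phi J X θstar Δα - θ'))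

/-- The dual coefficient vector `Δα_r*` of Proposition 3.1: on the forget indices
(`q.1 ∉ Dr`) it is `(1/λ) ∇_{f^lin(X_f, θ̂*)} L̂_D`, and on the retain indices (`q.1 ∈ Dr`)
it is `−(1/λ)( ∇_{f^lin(X_r, θ̂_r*)} L̂_{D_r} − ∇_{f^lin(X_r, θ̂*)} L̂_D )`. -/
def dalpha {din dout dθ n : ℕ}
    (f0 : (Fin din → ℝ) → Fin dout → ℝ)
    (J : (Fin din → ℝ) → Matrix (Fin dout) (Fin dθ) ℝ)
    (θ' : Fin dθ → ℝ) (X : Fin n → Fin din → ℝ) (Y : Fin n → Fin dout → ℝ)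
    (ℓ : (Fin dout → ℝ) → (Fin dout → ℝ) → ℝ) (lam : ℝ)
    (Dr : Finset (Fin n)) (θstar θrstar : Fin dθ → ℝ) :
    Fin n × Fin dout → ℝ :=
  fun q =>
    if q.1 ∈ Dr then
      -lam⁻¹ * ((Dr.card : ℝ)⁻¹ * gradloss ℓ (Y q.1) (flin f0 J θ' (X q.1) θrstar) q.2
        - (n : ℝ)⁻¹ * gradloss ℓ (Y q.1) (flin f0 J θ' (X q.1) θstar) q.2)
    else
      lam⁻¹ * ((n : ℝ)⁻¹ * gradloss ℓ (Y q.1) (flin f0 J θ' (X q.1) θstar) q.2)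

section AuxUnlearn

def mclm {k m : Type*} [Fintype k] [Fintype m] [DecidableEq k] (M : Matrix m k ℝ) :
    (k → ℝ) →L[ℝ] (m → ℝ) :=
  LinearMap.toContinuousLinearMap M.mulVecLin

@[simp] lemma mclm_apply {k m : Type*} [Fintype k] [Fintype m] [DecidableEq k]
    (M : Matrix m k ℝ) (v : k → ℝ) : mclm M v = M *ᵥ v := rfl

lemma hasFDerivAt_affine {k m : Type*} [Fintype k] [Fintype m] [DecidableEq k]
    (c : m → ℝ) (M : Matrix m k ℝ)
    (β : k → ℝ) : HasFDerivAt (fun v => c + M *ᵥ v) (mclm M) β :=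
  (mclm M).hasFDerivAt.const_add c

lemma clm_eval_sum {m : ℕ} (T : (Fin m → ℝ) →L[ℝ] ℝ) (w : Fin m → ℝ) :
    T w = ∑ b, w b * T (Pi.single b 1) := by
  have hw : w = ∑ b, w b • (Pi.single b 1 : Fin m → ℝ) := by
    conv_lhs => rw [← Finset.univ_sum_single w]
    exact Finset.sum_congr rfl fun b _ => by rw [← Pi.single_smul, smul_eq_mul, mul_one]
  conv_lhs => rw [hw]
  rw [map_sum]
  exact Finset.sum_congr rfl fun b _ => by rw [_root_.map_smul, smul_eq_mul]

lemma clm2_eval_sum {m : ℕ} (T : (Fin m → ℝ) →L[ℝ] ((Fin m → ℝ) →L[ℝ] ℝ)) (w1 w2 : Fin m → ℝ) :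
    T w1 w2 = ∑ a, ∑ b, w1 a * w2 b * T (Pi.single a 1) (Pi.single b 1) := by
  have hw : w1 = ∑ a, w1 a • (Pi.single a 1 : Fin m → ℝ) := by
    conv_lhs => rw [← Finset.univ_sum_single w1]
    exact Finset.sum_congr rfl fun a _ => by rw [← Pi.single_smul, smul_eq_mul, mul_one]
  conv_lhs => rw [hw, map_sum]
  rw [ContinuousLinearMap.sum_apply]
  refine Finset.sum_congr rfl fun a _ => ?_
  rw [_root_.map_smul, ContinuousLinearMap.smul_apply, smul_eq_mul,
    clm_eval_sum (T (Pi.single a 1)) w2, Finset.mul_sum]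
  exact Finset.sum_congr rfl fun b _ => by ring

lemma fderiv_fderiv_eval {m : ℕ} {L : (Fin m → ℝ) → ℝ} (hL : ContDiff ℝ 2 L)
    (c w : Fin m → ℝ) :
    fderiv ℝ (fun v => fderiv ℝ L v w) c
      = (ContinuousLinearMap.apply ℝ ℝ w).comp (fderiv ℝ (fderiv ℝ L) c) := by
  have hF : Differentiable ℝ (fderiv ℝ L) :=
    (hL.fderiv_right (m := 1) (by norm_num)).differentiable (by norm_num)
  exact ((ContinuousLinearMap.apply ℝ ℝ w).hasFDerivAt.comp c (hF c).hasFDerivAt).fderiv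

lemma second_deriv_bilinear {m : ℕ} {L : (Fin m → ℝ) → ℝ} (hL : ContDiff ℝ 2 L)
    (c w1 w2 : Fin m → ℝ) :
    fderiv ℝ (fderiv ℝ L) c w1 w2
      = ∑ a, ∑ b, w1 a * w2 b *
          fderiv ℝ (fun v => fderiv ℝ L v (Pi.single b 1)) c (Pi.single a 1) := by
  rw [clm2_eval_sum (fderiv ℝ (fderiv ℝ L) c) w1 w2]
  refine Finset.sum_congr rfl fun a _ => Finset.sum_congr rfl fun b _ => ?_
  rw [fderiv_fderiv_eval hL c (Pi.single b 1)]
  rfl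

lemma dual_fderiv_apply {din dout dθ n : ℕ}
    (f0 : (Fin din → ℝ) → Fin dout → ℝ)
    (J : (Fin din → ℝ) → Matrix (Fin dout) (Fin dθ) ℝ)
    (θ' : Fin dθ → ℝ) (X : Fin n → Fin din → ℝ) (Y : Fin n → Fin dout → ℝ)
    (ℓ : (Fin dout → ℝ) → (Fin dout → ℝ) → ℝ) (lam : ℝ) (θstar : Fin dθ → ℝ)
    (hC2 : ∀ ytgt, ContDiff ℝ 2 fun u => ℓ u ytgt)
    (S : Finset (Fin n)) (β e : Fin n × Fin dout → ℝ) :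
    fderiv ℝ (dualRisk f0 J θ' X Y ℓ lam θstar S) β e
      = (S.card : ℝ)⁻¹ * ∑ i ∈ S,
          (fderiv ℝ (fun u => ℓ u (Y i))
              (flin f0 J θ' (X i) θstar + KxX J X (X i) *ᵥ β) (KxX J X (X i) *ᵥ e)
            + lam * ∑ p, ((θstar - θ') p + ((JX J X)ᵀ *ᵥ β) p) * ((JX J X)ᵀ *ᵥ e) p) := by
  set B := (JX J X)ᵀ with hB
  set d := θstar - θ' with hd
  have hfun : dualRisk f0 J θ' X Y ℓ lam θstar S
      = fun γ => (S.card : ℝ)⁻¹ * ∑ i ∈ S,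
          (ℓ (flin f0 J θ' (X i) θstar + KxX J X (X i) *ᵥ γ) (Y i)
            + lam / 2 * ∑ p, (d p + (B *ᵥ γ) p) * (d p + (B *ᵥ γ) p)) := by
    funext γ
    unfold dualRisk glin
    congr 1
    refine Finset.sum_congr rfl fun i _ => ?_
    congr 1
    unfold sqnorm phi
    congr 1
    refine Finset.sum_congr rfl fun p _ => ?_
    simp only [hd, Pi.add_apply, Pi.sub_apply]
    ring
  rw [hfun]
  have hHas : HasFDerivAt (fun γ => (S.card : ℝ)⁻¹ * ∑ i ∈ S,
          (ℓ (flin f0 J θ' (X i) θstar + KxX J X (X i) *ᵥ γ) (Y i)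
            + lam / 2 * ∑ p, (d p + (B *ᵥ γ) p) * (d p + (B *ᵥ γ) p)))
      ((S.card : ℝ)⁻¹ • ∑ i ∈ S,
        ((fderiv ℝ (fun u => ℓ u (Y i))
            (flin f0 J θ' (X i) θstar + KxX J X (X i) *ᵥ β)).comp (mclm (KxX J X (X i)))
          + (lam / 2) • ∑ p,
              ((d p + (B *ᵥ β) p) • ((ContinuousLinearMap.proj p).comp (mclm B))
                + (d p + (B *ᵥ β) p) • ((ContinuousLinearMap.proj p).comp (mclm B))))) β := by
    refine HasFDerivAt.const_mul (HasFDerivAt.fun_sum fun i _ => ?_) _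
    have haff := hasFDerivAt_affine (flin f0 J θ' (X i) θstar) (KxX J X (X i)) β
    have hl : HasFDerivAt (fun u => ℓ u (Y i))
        (fderiv ℝ (fun u => ℓ u (Y i)) (flin f0 J θ' (X i) θstar + KxX J X (X i) *ᵥ β))
        (flin f0 J θ' (X i) θstar + KxX J X (X i) *ᵥ β) :=
      (((hC2 (Y i)).differentiable (by norm_num)) _).hasFDerivAt
    have hg : ∀ p : Fin dθ, HasFDerivAt (fun γ => d p + (B *ᵥ γ) p)
        ((ContinuousLinearMap.proj p).comp (mclm B)) β := by
      intro p
      exact ((ContinuousLinearMap.proj p).hasFDerivAt.comp β (mclm B).hasFDerivAt).const_add (d p)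
    exact (hl.comp β haff).add
      ((HasFDerivAt.fun_sum fun p _ => (hg p).mul (hg p)).const_mul (lam / 2))
  rw [hHas.fderiv]
  simp only [ContinuousLinearMap.smul_apply, ContinuousLinearMap.sum_apply,
    ContinuousLinearMap.add_apply, ContinuousLinearMap.comp_apply,
    ContinuousLinearMap.proj_apply, mclm_apply, smul_eq_mul]
  congr 1
  refine Finset.sum_congr rfl fun i _ => ?_
  congr 1
  rw [Finset.sum_add_distrib]
  ring

lemma KxX_entry {din dout dθ n : ℕ}
    (J : (Fin din → ℝ) → Matrix (Fin dout) (Fin dθ) ℝ)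
    (X : Fin n → Fin din → ℝ) (i : Fin n) (a : Fin dout) (q : Fin n × Fin dout) :
    KxX J X (X i) a q = Kmat J X (i, a) q := by
  simp [KxX, Kmat, JX, Matrix.mul_apply, Matrix.transpose_apply]

lemma dual_hessian {din dout dθ n : ℕ}
    (f0 : (Fin din → ℝ) → Fin dout → ℝ)
    (J : (Fin din → ℝ) → Matrix (Fin dout) (Fin dθ) ℝ)
    (θ' : Fin dθ → ℝ) (X : Fin n → Fin din → ℝ) (Y : Fin n → Fin dout → ℝ)
    (ℓ : (Fin dout → ℝ) → (Fin dout → ℝ) → ℝ) (lam : ℝ) (θstar : Fin dθ → ℝ)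
    (hC2 : ∀ ytgt, ContDiff ℝ 2 fun u => ℓ u ytgt)
    (S : Finset (Fin n)) (q q' : Fin n × Fin dout) :
    fderiv ℝ (fun β : Fin n × Fin dout → ℝ =>
        fderiv ℝ (dualRisk f0 J θ' X Y ℓ lam θstar S) β (Pi.single q' 1))
      (0 : Fin n × Fin dout → ℝ) (Pi.single q 1)
    = (S.card : ℝ)⁻¹ * ∑ i ∈ S,
        ((∑ a : Fin dout, ∑ b : Fin dout,
            Kmat J X (i, a) q * hessloss ℓ (Y i) (flin f0 J θ' (X i) θstar) a b *
              Kmat J X (i, b) q')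
          + lam * Kmat J X q q') := by
  set B := (JX J X)ᵀ with hB
  set d := θstar - θ' with hd
  set e' : Fin n × Fin dout → ℝ := Pi.single q' 1 with he'
  have hfun : (fun β : Fin n × Fin dout → ℝ =>
      fderiv ℝ (dualRisk f0 J θ' X Y ℓ lam θstar S) β e')
      = fun β => (S.card : ℝ)⁻¹ * ∑ i ∈ S,
          (fderiv ℝ (fun u => ℓ u (Y i))
              (flin f0 J θ' (X i) θstar + KxX J X (X i) *ᵥ β) (KxX J X (X i) *ᵥ e')
            + lam * ∑ p, (d p + (B *ᵥ β) p) * (B *ᵥ e') p) := by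
    funext β
    exact dual_fderiv_apply f0 J θ' X Y ℓ lam θstar hC2 S β e'
  rw [hfun]
  have hHas : HasFDerivAt (fun β : Fin n × Fin dout → ℝ =>
      (S.card : ℝ)⁻¹ * ∑ i ∈ S,
          (fderiv ℝ (fun u => ℓ u (Y i))
              (flin f0 J θ' (X i) θstar + KxX J X (X i) *ᵥ β) (KxX J X (X i) *ᵥ e')
            + lam * ∑ p, (d p + (B *ᵥ β) p) * (B *ᵥ e') p))
      ((S.card : ℝ)⁻¹ • ∑ i ∈ S,
        ((ContinuousLinearMap.apply ℝ ℝ (KxX J X (X i) *ᵥ e')).comp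
            ((fderiv ℝ (fderiv ℝ (fun u => ℓ u (Y i)))
                (flin f0 J θ' (X i) θstar + KxX J X (X i) *ᵥ (0 : Fin n × Fin dout → ℝ))).comp
              (mclm (KxX J X (X i))))
          + lam • ∑ p, ((B *ᵥ e') p • ((ContinuousLinearMap.proj p).comp (mclm B)))))
      (0 : Fin n × Fin dout → ℝ) := by
    refine HasFDerivAt.const_mul (HasFDerivAt.fun_sum fun i _ => ?_) _
    have haff := hasFDerivAt_affine (flin f0 J θ' (X i) θstar) (KxX J X (X i))
      (0 : Fin n × Fin dout → ℝ)
    have hF : Differentiable ℝ (fderiv ℝ (fun u => ℓ u (Y i))) :=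
      ((hC2 (Y i)).fderiv_right (m := 1) (by norm_num)).differentiable (by norm_num)
    have h1 : HasFDerivAt (fun β : Fin n × Fin dout → ℝ =>
        fderiv ℝ (fun u => ℓ u (Y i))
          (flin f0 J θ' (X i) θstar + KxX J X (X i) *ᵥ β) (KxX J X (X i) *ᵥ e'))
        ((ContinuousLinearMap.apply ℝ ℝ (KxX J X (X i) *ᵥ e')).comp
          ((fderiv ℝ (fderiv ℝ (fun u => ℓ u (Y i)))
              (flin f0 J θ' (X i) θstar + KxX J X (X i) *ᵥ (0 : Fin n × Fin dout → ℝ))).comp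
            (mclm (KxX J X (X i)))))
        (0 : Fin n × Fin dout → ℝ) :=
      (ContinuousLinearMap.apply ℝ ℝ (KxX J X (X i) *ᵥ e')).hasFDerivAt.comp _
        (((hF _).hasFDerivAt).comp _ haff)
    have h2 : HasFDerivAt (fun β : Fin n × Fin dout → ℝ =>
        lam * ∑ p, (d p + (B *ᵥ β) p) * (B *ᵥ e') p)
        (lam • ∑ p, ((B *ᵥ e') p • ((ContinuousLinearMap.proj p).comp (mclm B))))
        (0 : Fin n × Fin dout → ℝ) := by
      refine HasFDerivAt.const_mul (HasFDerivAt.fun_sum fun p _ => ?_) _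
      exact (((ContinuousLinearMap.proj p).hasFDerivAt.comp _
        (mclm B).hasFDerivAt).const_add (d p)).mul_const _
    exact h1.add h2
  rw [hHas.fderiv]
  simp only [ContinuousLinearMap.smul_apply, ContinuousLinearMap.sum_apply,
    ContinuousLinearMap.add_apply, ContinuousLinearMap.comp_apply,
    ContinuousLinearMap.proj_apply, mclm_apply, smul_eq_mul,
    ContinuousLinearMap.apply_apply]
  congr 1
  refine Finset.sum_congr rfl fun i _ => ?_
  rw [Matrix.mulVec_zero, add_zero,
    second_deriv_bilinear (hC2 (Y i)) (flin f0 J θ' (X i) θstar)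
      (KxX J X (X i) *ᵥ Pi.single q 1) (KxX J X (X i) *ᵥ e')]
  congr 1
  · refine Finset.sum_congr rfl fun a _ => Finset.sum_congr rfl fun b _ => ?_
    simp only [he', Matrix.mulVec_single_one, Matrix.col_apply, mul_one]
    rw [show (fderiv ℝ (fun v => fderiv ℝ (fun u => ℓ u (Y i)) v (Pi.single b 1))
          (flin f0 J θ' (X i) θstar) (Pi.single a 1))
        = hessloss ℓ (Y i) (flin f0 J θ' (X i) θstar) a b from rfl,
      KxX_entry, KxX_entry]
    ring
  · have hK : Kmat J X q q' = ∑ p, (B *ᵥ Pi.single q 1) p * (B *ᵥ e') p := by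
      simp [Kmat, Matrix.mul_apply, hB, he', Matrix.mulVec_single, Matrix.transpose_apply]
    rw [hK, Finset.mul_sum, Finset.mul_sum]
    exact Finset.sum_congr rfl fun p _ => by ring


end AuxUnlearn

/-- with `D` partitioned into a nonempty forget set `D_f` and a nonempty
retain set `D_r`, the upweighted dual Hessian at `Δα = 0` satisfies
`∇²L̃_D(0) − (|D_f|/|D|) ∇²L̃_{D_f}(0)
  = (|D_r|/|D|) ( K_rᵀ ∇²_{f^lin(X_r, θ̂*)} L̂_{D_r} K_r + λ K )`. -/
theorem stmt_11 {din dout dθ n : ℕ} (hn : 0 < n)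
    (f0 : (Fin din → ℝ) → Fin dout → ℝ)
    (J : (Fin din → ℝ) → Matrix (Fin dout) (Fin dθ) ℝ)
    (θ' : Fin dθ → ℝ) (X : Fin n → Fin din → ℝ) (Y : Fin n → Fin dout → ℝ)
    (ℓ : (Fin dout → ℝ) → (Fin dout → ℝ) → ℝ) (lam : ℝ)
    (hℓ0 : ∀ u ytgt, 0 ≤ ℓ u ytgt)
    (hconv : ∀ ytgt, ConvexOn ℝ Set.univ fun u => ℓ u ytgt)
    (hC2 : ∀ ytgt, ContDiff ℝ 2 fun u => ℓ u ytgt)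
    (hlam : 0 < lam)
    (θstar : Fin dθ → ℝ)
    (hmin : ∀ θ : Fin dθ → ℝ,
      empRisk f0 J θ' X Y ℓ lam Finset.univ θstar ≤ empRisk f0 J θ' X Y ℓ lam Finset.univ θ)
    (Df Dr : Finset (Fin n)) (hDf : Df.Nonempty) (hDr : Dr.Nonempty)
    (hdisj : Disjoint Df Dr) (hunion : Df ∪ Dr = Finset.univ) :
    (fun q q' : Fin n × Fin dout =>
        fderiv ℝ
          (fun β : Fin n × Fin dout → ℝ =>
            fderiv ℝ (dualRisk f0 J θ' X Y ℓ lam θstar Finset.univ) β (Pi.single q' 1))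
          (0 : Fin n × Fin dout → ℝ) (Pi.single q 1)
        - (Df.card : ℝ) / n *
          fderiv ℝ
            (fun β : Fin n × Fin dout → ℝ =>
              fderiv ℝ (dualRisk f0 J θ' X Y ℓ lam θstar Df) β (Pi.single q' 1))
            (0 : Fin n × Fin dout → ℝ) (Pi.single q 1)) =
      fun q q' : Fin n × Fin dout =>
        (Dr.card : ℝ) / n *
          ((∑ i ∈ Dr, ∑ a : Fin dout, ∑ b : Fin dout,
              Kmat J X (i, a) q *
                ((Dr.card : ℝ)⁻¹ * hessloss ℓ (Y i) (flin f0 J θ' (X i) θstar) a b) *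
                Kmat J X (i, b) q')
            + lam * Kmat J X q q') := by
  funext q
  funext q'
  rw [dual_hessian f0 J θ' X Y ℓ lam θstar hC2 Finset.univ q q',
      dual_hessian f0 J θ' X Y ℓ lam θstar hC2 Df q q']
  set T : Fin n → ℝ := fun i => ∑ a : Fin dout, ∑ b : Fin dout,
    Kmat J X (i, a) q * hessloss ℓ (Y i) (flin f0 J θ' (X i) θstar) a b * Kmat J X (i, b) q'
    with hT
  have hR : (∑ i ∈ Dr, ∑ a : Fin dout, ∑ b : Fin dout,
      Kmat J X (i, a) q * ((Dr.card : ℝ)⁻¹ * hessloss ℓ (Y i) (flin f0 J θ' (X i) θstar) a b) *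
        Kmat J X (i, b) q') = (Dr.card : ℝ)⁻¹ * ∑ i ∈ Dr, T i := by
    rw [Finset.mul_sum]
    refine Finset.sum_congr rfl fun i _ => ?_
    rw [hT, Finset.mul_sum]
    refine Finset.sum_congr rfl fun a _ => ?_
    rw [Finset.mul_sum]
    exact Finset.sum_congr rfl fun b _ => by ring
  rw [hR]
  have hsplit : ∀ S : Finset (Fin n), (∑ i ∈ S, (T i + lam * Kmat J X q q'))
      = ∑ i ∈ S, T i + (S.card : ℝ) * (lam * Kmat J X q q') := by
    intro S
    rw [Finset.sum_add_distrib, Finset.sum_const, nsmul_eq_mul]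
  rw [hsplit, hsplit]
  have hU : (Finset.univ : Finset (Fin n)) = Df ∪ Dr := hunion.symm
  have hsum : (∑ i ∈ (Finset.univ : Finset (Fin n)), T i) = ∑ i ∈ Df, T i + ∑ i ∈ Dr, T i := by
    rw [hU, Finset.sum_union hdisj]
  have hcards : (n : ℝ) = (Df.card : ℝ) + (Dr.card : ℝ) := by
    have h : Df.card + Dr.card = n := by
      rw [← Finset.card_union_of_disjoint hdisj, hunion, Finset.card_univ, Fintype.card_fin]
    exact_mod_cast h.symm
  have hf0 : (Df.card : ℝ) ≠ 0 := Nat.cast_ne_zero.mpr (Finset.card_ne_zero_of_mem hDf.choose_spec)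
  have hr0 : (Dr.card : ℝ) ≠ 0 := Nat.cast_ne_zero.mpr (Finset.card_ne_zero_of_mem hDr.choose_spec)
  have hn0 : (n : ℝ) ≠ 0 := Nat.cast_ne_zero.mpr hn.ne'
  simp only [Finset.card_univ, Fintype.card_fin] at *
  rw [hsum, hcards]
  clear_value T
  clear hcards hsum hR hsplit hU hT hmin hconv hℓ0
  field_simp
  ring
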